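/- The gap between the ITE risk and the PIP loss admits the exact decomposition ε_ITE − ε_PIP = H1 + H2 + H3 + H4, where H1 = u_0 ∫_𝒳 [ r_1(x)² − ∫_𝒮 r̈_1(x,s)² p_0(s|x) ds ] p_0(x) dx, H2 = u_1 ∫_𝒳 [ r_0(x)² − ∫_𝒮 r̈_0(x,s)² p_1(s|x) ds ] p_1(x) dx, H3 = 2 u_0 ∫_𝒳 [ ∫_𝒮 r_0(x) r̈_1(x,s) p_0(s|x) ds − r_1(x) r_0(x) ] p_0(x) dx, and H4 = 2 u_1 ∫_𝒳 [ ∫_𝒮 r_1(x) r̈_0(x,s) p_1(s|x) ds − r_0(x) r_1(x) ] p_1(x) dx. -/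

import Mathlib

open MeasureTheory ProbabilityTheory

lemma mul_int {α : Type*} [MeasurableSpace α] {μ : Measure α} {f g : α → ℝ}
    (hf : MemLp f 2 μ) (hg : MemLp g 2 μ) : Integrable (fun x => f x * g x) μ := by
  have h : MemLp (f • g) 1 μ := hg.smul hf
  simpa [Pi.smul_apply, smul_eq_mul] using (memLp_one_iff_integrable.mp h : Integrable (fun x => f x * g x) μ)

lemma mp_fst {α β : Type*} [MeasurableSpace α] [MeasurableSpace β]
    (μ : Measure α) [SFinite μ] (ν : Kernel α β) [IsMarkovKernel ν] :
    MeasurePreserving (Prod.fst) (μ ⊗ₘ ν) μ :=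
  ⟨measurable_fst, by rw [← Measure.fst]; exact Measure.fst_compProd μ ν⟩

lemma int_int {α β : Type*} [MeasurableSpace α] [MeasurableSpace β] {μ : Measure α}
    [SFinite μ] {κ : Kernel α β} [IsSFiniteKernel κ] {f : α × β → ℝ}
    (hf : Integrable f (μ ⊗ₘ κ)) : Integrable (fun x => ∫ y, f (x, y) ∂κ x) μ := by
  rw [Measure.compProd] at hf
  simpa using hf.integral_compProd

lemma expand_sq {α : Type*} [MeasurableSpace α] {μ : Measure α} {f g : α → ℝ}
    (hf : MemLp f 2 μ) (hg : MemLp g 2 μ) :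
    ∫ x, (f x - g x) ^ 2 ∂μ =
      (∫ x, f x ^ 2 ∂μ) - 2 * ∫ x, f x * g x ∂μ + ∫ x, g x ^ 2 ∂μ := by
  have h1 : ∫ x, (f x - g x) ^ 2 ∂μ
      = ∫ x, (f x ^ 2 - 2 * (f x * g x) + g x ^ 2) ∂μ := by
    refine integral_congr_ae (Filter.Eventually.of_forall fun x => ?_)
    ring
  have hmul : Integrable (fun x => 2 * (f x * g x)) μ := (mul_int hf hg).const_mul 2
  have ha : Integrable (fun x => f x ^ 2 - 2 * (f x * g x)) μ := hf.integrable_sq.sub hmul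
  rw [h1, integral_add ha hg.integrable_sq, integral_sub hf.integrable_sq hmul,
    MeasureTheory.integral_const_mul]

/-- exact decomposition of the gap between the ITE risk and the PIP loss.
`𝒳 = ℝ^k` is the covariate space, `𝒮 = ℝ^m` the space of post-treatment variables and
`R` the representation space.  `μ0, μ1` are the covariate distributions of the two
treatment groups, `ν0, ν1` the conditional (Markov) kernels `x ↦ p_t(s|x)`,
`u0, u1 ∈ (0,1)` with `u0 + u1 = 1` the marginal treatment probabilities.
`f0, f1` is the outcome predictor, `fs0, fs1` the true outcome functions, `ψ` the
representation map and `q0, q1` the pseudo-outcome constructor.  With the residuals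
`r_t(x) = f_t(x) − f*_t(x)` and `r̈_t(x,s) = f_t(x) − q_t(x, ψ(s))`, the gap
`ε_ITE − ε_PIP` equals `H1 + H2 + H3 + H4`. -/
theorem ite_minus_pip_decomposition
    {k m : ℕ} {R : Type*} [MeasurableSpace R]
    (μ0 μ1 : Measure (EuclideanSpace ℝ (Fin k)))
    [IsProbabilityMeasure μ0] [IsProbabilityMeasure μ1]
    (ν0 ν1 : Kernel (EuclideanSpace ℝ (Fin k)) (EuclideanSpace ℝ (Fin m)))
    [IsMarkovKernel ν0] [IsMarkovKernel ν1]
    (u0 u1 : ℝ) (hu0 : u0 ∈ Set.Ioo (0 : ℝ) 1) (hu1 : u1 ∈ Set.Ioo (0 : ℝ) 1)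
    (husum : u0 + u1 = 1)
    (f0 f1 fs0 fs1 : EuclideanSpace ℝ (Fin k) → ℝ)
    (hf0 : Measurable f0) (hf1 : Measurable f1)
    (hfs0 : Measurable fs0) (hfs1 : Measurable fs1)
    (ψ : EuclideanSpace ℝ (Fin m) → R) (hψ : Measurable ψ)
    (q0 q1 : EuclideanSpace ℝ (Fin k) → R → ℝ)
    (hq0 : Measurable (Function.uncurry q0)) (hq1 : Measurable (Function.uncurry q1))
    -- residuals
    (r0 r1 : EuclideanSpace ℝ (Fin k) → ℝ)
    (hr0 : r0 = fun x => f0 x - fs0 x) (hr1 : r1 = fun x => f1 x - fs1 x)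
    (rd0 rd1 : EuclideanSpace ℝ (Fin k) → EuclideanSpace ℝ (Fin m) → ℝ)
    (hrd0 : rd0 = fun x s => f0 x - q0 x (ψ s))
    (hrd1 : rd1 = fun x s => f1 x - q1 x (ψ s))
    -- square integrability against the relevant measures
    (h00 : MemLp r0 2 μ0) (h01 : MemLp r0 2 μ1)
    (h10 : MemLp r1 2 μ0) (h11 : MemLp r1 2 μ1)
    (hd00 : MemLp (fun p => rd0 p.1 p.2) 2 (μ0 ⊗ₘ ν0))
    (hd01 : MemLp (fun p => rd0 p.1 p.2) 2 (μ1 ⊗ₘ ν1))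
    (hd10 : MemLp (fun p => rd1 p.1 p.2) 2 (μ0 ⊗ₘ ν0))
    (hd11 : MemLp (fun p => rd1 p.1 p.2) 2 (μ1 ⊗ₘ ν1)) :
    -- ε_ITE − ε_PIP = H1 + H2 + H3 + H4
    (u0 * ∫ x, (r1 x - r0 x) ^ 2 ∂μ0 + u1 * ∫ x, (r1 x - r0 x) ^ 2 ∂μ1)
      - -- ε_PIP = ε_F + ε̈_CF − 2 Σ_t u_t ∫∫ r_t(x) r̈_{1−t}(x,s) p_t(s|x) p_t(x) ds dx
      ((u0 * ∫ x, (r0 x) ^ 2 ∂μ0 + u1 * ∫ x, (r1 x) ^ 2 ∂μ1)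
        + (u1 * ∫ x, ∫ s, (rd0 x s) ^ 2 ∂(ν1 x) ∂μ1
            + u0 * ∫ x, ∫ s, (rd1 x s) ^ 2 ∂(ν0 x) ∂μ0)
        - 2 * (u0 * ∫ x, ∫ s, r0 x * rd1 x s ∂(ν0 x) ∂μ0
            + u1 * ∫ x, ∫ s, r1 x * rd0 x s ∂(ν1 x) ∂μ1))
      =
      -- H1
      u0 * ∫ x, ((r1 x) ^ 2 - ∫ s, (rd1 x s) ^ 2 ∂(ν0 x)) ∂μ0
      -- H2
      + u1 * ∫ x, ((r0 x) ^ 2 - ∫ s, (rd0 x s) ^ 2 ∂(ν1 x)) ∂μ1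
      -- H3
      + 2 * u0 * ∫ x, ((∫ s, r0 x * rd1 x s ∂(ν0 x)) - r1 x * r0 x) ∂μ0
      -- H4
      + 2 * u1 * ∫ x, ((∫ s, r1 x * rd0 x s ∂(ν1 x)) - r0 x * r1 x) ∂μ1 := by
  -- lifted Memℒp facts on the product spaces
  have h00' : MemLp (fun p : _ × EuclideanSpace ℝ (Fin m) => r0 p.1) 2 (μ0 ⊗ₘ ν0) :=
    h00.comp_measurePreserving (mp_fst μ0 ν0)
  have h11' : MemLp (fun p : _ × EuclideanSpace ℝ (Fin m) => r1 p.1) 2 (μ1 ⊗ₘ ν1) :=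
    h11.comp_measurePreserving (mp_fst μ1 ν1)
  -- integrability of the inner-integral functions (squares)
  have Jsq0 : Integrable (fun x => ∫ s, (rd1 x s) ^ 2 ∂ν0 x) μ0 :=
    int_int hd10.integrable_sq
  have Jsq1 : Integrable (fun x => ∫ s, (rd0 x s) ^ 2 ∂ν1 x) μ1 :=
    int_int hd01.integrable_sq
  -- integrability of the mixed inner-integral functions
  have Jmix0 : Integrable (fun x => ∫ s, r0 x * rd1 x s ∂ν0 x) μ0 :=
    int_int (mul_int h00' hd10)
  have Jmix1 : Integrable (fun x => ∫ s, r1 x * rd0 x s ∂ν1 x) μ1 :=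
    int_int (mul_int h11' hd01)
  -- split the H-integrals
  have e1 : ∫ x, ((r1 x) ^ 2 - ∫ s, (rd1 x s) ^ 2 ∂ν0 x) ∂μ0
      = (∫ x, (r1 x) ^ 2 ∂μ0) - ∫ x, ∫ s, (rd1 x s) ^ 2 ∂ν0 x ∂μ0 :=
    integral_sub h10.integrable_sq Jsq0
  have e2 : ∫ x, ((r0 x) ^ 2 - ∫ s, (rd0 x s) ^ 2 ∂ν1 x) ∂μ1
      = (∫ x, (r0 x) ^ 2 ∂μ1) - ∫ x, ∫ s, (rd0 x s) ^ 2 ∂ν1 x ∂μ1 :=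
    integral_sub h01.integrable_sq Jsq1
  have e3 : ∫ x, ((∫ s, r0 x * rd1 x s ∂ν0 x) - r1 x * r0 x) ∂μ0
      = (∫ x, ∫ s, r0 x * rd1 x s ∂ν0 x ∂μ0) - ∫ x, r1 x * r0 x ∂μ0 :=
    integral_sub Jmix0 (mul_int h10 h00)
  have e4 : ∫ x, ((∫ s, r1 x * rd0 x s ∂ν1 x) - r0 x * r1 x) ∂μ1
      = (∫ x, ∫ s, r1 x * rd0 x s ∂ν1 x ∂μ1) - ∫ x, r0 x * r1 x ∂μ1 :=
    integral_sub Jmix1 (mul_int h01 h11)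
  -- expand the ITE squares
  have e5 := expand_sq h10 h00
  have e6 := expand_sq h11 h01
  -- commutativity of products inside integrals
  have c0 : ∫ x, r0 x * r1 x ∂μ1 = ∫ x, r1 x * r0 x ∂μ1 := by
    refine integral_congr_ae (Filter.Eventually.of_forall fun x => ?_); ring
  rw [e1, e2, e3, e4, e5, e6, c0]
  ring
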